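/- Let n ≥ 3, fix secrets x : ZMod n → Bool and bits β, β' ∈ Bool. Consider the map Φ sending each b : ZMod n → Bool with b(0) = β and b(n−1) = β' to the announcement vector a : ZMod n → Bool defined by a(i) := x(i) XOR b(i) XOR b(i−1). Then Φ is injective and its image is exactly the set A := {a : ZMod n → Bool | ⨁_i a(i) = ⨁_i x(i) and a(0) = x(0) XOR β XOR β'}; consequently |A| = 2^{n−2} and, when the bits b(1),…,b(n−2) are chosen independently and uniformly at random, the announcement vector is uniformly distributed over A. -/

import Mathlib

instance : Std.Commutative (α := Bool) xor := ⟨Bool.xor_comm⟩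
instance : Std.Associative (α := Bool) xor := ⟨Bool.xor_assoc⟩

/-- XOR of a Boolean-valued function over all indices in `ZMod n`. -/
def bigXor (n : ℕ) [NeZero n] (f : ZMod n → Bool) : Bool :=
  Finset.univ.fold xor false f

lemma xor_eq_add (p q : Bool) : xor p q = p + q := rfl

lemma bigXor_eq_sum (n : ℕ) [NeZero n] (f : ZMod n → Bool) : bigXor n f = ∑ i, f i := rfl

/-- The recursively reconstructed shared bits. -/
def dcRec (n : ℕ) (x a : ZMod n → Bool) (β : Bool) : ℕ → Bool
  | 0 => β
  | k+1 => xor (a ((k+1 : ℕ) : ZMod n)) (xor (x ((k+1 : ℕ) : ZMod n)) (dcRec n x a β k))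

lemma dcRec_closed (n : ℕ) (x a : ZMod n → Bool) (β : Bool) (m : ℕ) :
    dcRec n x a β m =
      β + ∑ k ∈ Finset.range m, (a ((k+1 : ℕ) : ZMod n) + x ((k+1 : ℕ) : ZMod n)) := by
  induction m with
  | zero => simp [dcRec]
  | succ m ih =>
      rw [Finset.sum_range_succ, dcRec, ih, xor_eq_add, xor_eq_add]
      ring

lemma sum_zmod_eq_sum_range (n : ℕ) [NeZero n] (g : ZMod n → Bool) :
    ∑ i, g i = ∑ k ∈ Finset.range n, g ((k : ℕ) : ZMod n) :=
  Finset.sum_nbij' (fun a => a.val) (fun k => ((k : ℕ) : ZMod n))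
    (fun a _ => Finset.mem_range.2 (ZMod.val_lt a))
    (fun k _ => Finset.mem_univ _)
    (fun a _ => ZMod.natCast_rightInverse a)
    (fun k hk => ZMod.val_cast_of_lt (Finset.mem_range.1 hk))
    (fun a _ => by rw [ZMod.natCast_rightInverse a])

theorem stmt11 (n : ℕ) (hn : 3 ≤ n) [NeZero n] (x : ZMod n → Bool) (β β' : Bool) :
    let D := {b : ZMod n → Bool // b 0 = β ∧ b ((n - 1 : ℕ) : ZMod n) = β'}
    let Φ : D → (ZMod n → Bool) := fun b i => xor (x i) (xor (b.1 i) (b.1 (i - 1)))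
    let A : Set (ZMod n → Bool) :=
      {a | bigXor n a = bigXor n x ∧ a 0 = xor (x 0) (xor β β')}
    Function.Injective Φ ∧
      Set.range Φ = A ∧
      Nat.card A = 2 ^ (n - 2) ∧
      ∀ a₁ ∈ A, ∀ a₂ ∈ A,
        Nat.card {b : D // Φ b = a₁} = Nat.card {b : D // Φ b = a₂} := by
  intro D Φ A
  set c : ZMod n := ((n - 1 : ℕ) : ZMod n) with hcdef
  have hn1 : n - 1 < n := by omega
  have hcval : c.val = n - 1 := ZMod.val_cast_of_lt hn1
  have hc0 : c ≠ 0 := by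
    intro h
    rw [h, ZMod.val_zero] at hcval
    omega
  have hcneg : c = -1 := by
    have : ((n : ℕ) : ZMod n) = 0 := ZMod.natCast_self n
    rw [hcdef, Nat.cast_sub (by omega : 1 ≤ n), this]
    ring
  -- Injectivity
  have hinj : Function.Injective Φ := by
    intro b b' h
    have key : ∀ k : ℕ, k < n → b.1 ((k : ℕ) : ZMod n) = b'.1 ((k : ℕ) : ZMod n) := by
      intro k
      induction k with
      | zero => intro _; simp only [Nat.cast_zero]; rw [b.2.1, b'.2.1]
      | succ k ih =>
          intro hk
          have h1 : xor (x ((k+1 : ℕ) : ZMod n))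
              (xor (b.1 ((k+1 : ℕ) : ZMod n)) (b.1 (((k+1 : ℕ) : ZMod n) - 1))) =
              xor (x ((k+1 : ℕ) : ZMod n))
              (xor (b'.1 ((k+1 : ℕ) : ZMod n)) (b'.1 (((k+1 : ℕ) : ZMod n) - 1))) :=
            congrFun h (((k+1 : ℕ) : ZMod n))
          have hsub : (((k+1 : ℕ) : ZMod n)) - 1 = ((k : ℕ) : ZMod n) := by push_cast; ring
          rw [hsub] at h1
          have hbk := ih (by omega)
          rw [← hbk] at h1
          have lem : ∀ p q r s : Bool, xor p (xor q r) = xor p (xor s r) → q = s := by decide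
          exact lem _ _ _ _ h1
    exact Subtype.ext (funext fun i => by
      have := key i.val (ZMod.val_lt i)
      rwa [ZMod.natCast_rightInverse i] at this)
  -- Range
  have hA : ∀ b : D, Φ b ∈ A := by
    intro b
    constructor
    · rw [bigXor_eq_sum, bigXor_eq_sum]
      show ∑ i, (x i + (b.1 i + b.1 (i - 1))) = ∑ i, x i
      rw [Finset.sum_add_distrib, Finset.sum_add_distrib]
      have hre : ∑ i : ZMod n, b.1 (i - 1) = ∑ i : ZMod n, b.1 i :=
        Fintype.sum_equiv (Equiv.subRight (1 : ZMod n)) _ _ (fun i => rfl)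
      rw [hre]
      have : ∀ s : Bool, s + s = 0 := by decide
      rw [this, add_zero]
    · show xor (x 0) (xor (b.1 0) (b.1 (0 - 1))) = _
      have h01 : (0 : ZMod n) - 1 = c := by rw [hcneg]; ring
      rw [h01, b.2.1, b.2.2]
  have hrange : Set.range Φ = A := by
    apply Set.eq_of_subset_of_subset
    · rintro _ ⟨b, rfl⟩; exact hA b
    · rintro a ⟨ha1, ha2⟩
      rw [bigXor_eq_sum, bigXor_eq_sum] at ha1
      set b0 : ZMod n → Bool := fun i => dcRec n x a β i.val with hb0
      have hb00 : b0 0 = β := by simp [hb0, ZMod.val_zero, dcRec]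
      -- the sums over range (n-1)
      set P : Bool := ∑ k ∈ Finset.range (n-1), a ((k+1 : ℕ) : ZMod n) with hP
      set Q : Bool := ∑ k ∈ Finset.range (n-1), x ((k+1 : ℕ) : ZMod n) with hQ
      have hsplit : ∀ g : ZMod n → Bool,
          ∑ i, g i = (∑ k ∈ Finset.range (n-1), g ((k+1 : ℕ) : ZMod n)) + g 0 := by
        intro g
        rw [sum_zmod_eq_sum_range]
        have hn' : n = (n - 1) + 1 := by omega
        have h := Finset.sum_range_succ' (fun k : ℕ => g ((k : ℕ) : ZMod n)) (n-1)
        rw [← hn'] at h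
        rw [h]
        simp
      have ha1' : P + a 0 = Q + x 0 := by
        rw [hP, hQ, ← hsplit a, ← hsplit x, ha1]
      have hb0c : b0 c = β' := by
        show dcRec n x a β c.val = β'
        rw [hcval, dcRec_closed]
        have hsum : ∑ k ∈ Finset.range (n-1),
            (a ((k+1 : ℕ) : ZMod n) + x ((k+1 : ℕ) : ZMod n)) = P + Q := by
          rw [hP, hQ, Finset.sum_add_distrib]
        rw [hsum]
        have lem : ∀ P Q a0 x0 β β' : Bool,
            P + a0 = Q + x0 → a0 = xor x0 (xor β β') → β + (P + Q) = β' := by decide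
        exact lem P Q (a 0) (x 0) β β' ha1' ha2
      have hrec : ∀ m : ℕ, m + 1 < n →
          b0 ((m+1 : ℕ) : ZMod n) = xor (a ((m+1 : ℕ) : ZMod n))
            (xor (x ((m+1 : ℕ) : ZMod n)) (b0 ((m : ℕ) : ZMod n))) := by
        intro m hm
        have h1 : b0 ((m : ℕ) : ZMod n) = dcRec n x a β m := by
          show dcRec n x a β (((m : ℕ) : ZMod n)).val = _
          rw [ZMod.val_cast_of_lt (by omega : m < n)]
        have h2 : b0 ((m+1 : ℕ) : ZMod n) = dcRec n x a β (m+1) := by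
          show dcRec n x a β (((m+1 : ℕ) : ZMod n)).val = _
          rw [ZMod.val_cast_of_lt hm]
        rw [h1, h2, dcRec]
      refine ⟨⟨b0, hb00, hb0c⟩, funext fun i => ?_⟩
      show xor (x i) (xor (b0 i) (b0 (i - 1))) = a i
      by_cases hi : i = 0
      · subst hi
        have h01 : (0 : ZMod n) - 1 = c := by rw [hcneg]; ring
        rw [h01, hb00, hb0c, ha2]
      · obtain ⟨m, hm⟩ : ∃ m, i.val = m + 1 := by
          have : i.val ≠ 0 := fun h => hi ((ZMod.val_eq_zero i).1 h)
          exact ⟨i.val - 1, by omega⟩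
        have hmlt : m + 1 < n := hm ▸ ZMod.val_lt i
        have hi' : i = ((m+1 : ℕ) : ZMod n) := by
          rw [← hm, ZMod.natCast_rightInverse i]
        rw [hi']
        have hsub : (((m+1 : ℕ) : ZMod n)) - 1 = ((m : ℕ) : ZMod n) := by push_cast; ring
        rw [hsub]
        have lem : ∀ p q r s : Bool, q = xor p (xor r s) → xor r (xor q s) = p := by decide
        exact lem _ _ _ _ (hrec m hmlt)
  -- Cardinality of A
  have hcardD : Nat.card D = 2 ^ (n - 2) := by
    have e : D ≃ ({i : ZMod n // i ≠ 0 ∧ i ≠ c} → Bool) :=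
      { toFun := fun b j => b.1 j.1
        invFun := fun g =>
          ⟨fun i => if h0 : i = 0 then β else if hc' : i = c then β' else g ⟨i, h0, hc'⟩,
            by simp, by simp [← hcdef, hc0]⟩
        left_inv := by
          rintro ⟨b, hb1, hb2⟩
          apply Subtype.ext
          funext i
          by_cases h0 : i = 0
          · subst h0; simp [hb1]
          · by_cases hc' : i = c
            · subst hc'; rw [← hcdef] at hb2; simp [hb2, hc0]
            · simp [h0, hc']
        right_inv := by
          intro g
          funext j
          simp [j.2.1, j.2.2] }
    rw [Nat.card_congr e, Nat.card_fun]
    have hsub : Nat.card {i : ZMod n // i ≠ 0 ∧ i ≠ c} = n - 2 := by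
      rw [Nat.card_eq_fintype_card, Fintype.card_subtype]
      have : Finset.filter (fun i : ZMod n => i ≠ 0 ∧ i ≠ c) Finset.univ =
          Finset.univ \ {0, c} := by
        ext i; simp [and_comm]
      rw [this, Finset.card_sdiff_of_subset (Finset.subset_univ _)]
      have h2 : ({0, c} : Finset (ZMod n)).card = 2 := by
        rw [Finset.card_insert_of_notMem (by simpa using (Ne.symm hc0)),
          Finset.card_singleton]
      rw [h2, Finset.card_univ, ZMod.card]
    rw [hsub, Nat.card_eq_fintype_card]
    norm_num
  have hcardA : Nat.card A = 2 ^ (n - 2) := by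
    rw [← hrange, Nat.card_range_of_injective hinj, hcardD]
  refine ⟨hinj, hrange, hcardA, ?_⟩
  -- Fibers
  have hfib : ∀ a ∈ A, Nat.card {b : D // Φ b = a} = 1 := by
    intro a ha
    obtain ⟨b, hb⟩ : a ∈ Set.range Φ := hrange ▸ ha
    haveI : Unique {b : D // Φ b = a} :=
      { default := ⟨b, hb⟩
        uniq := fun c' => Subtype.ext (hinj (c'.2.trans hb.symm)) }
    exact Nat.card_unique
  intro a₁ ha₁ a₂ ha₂
  rw [hfib a₁ ha₁, hfib a₂ ha₂]
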